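/- If an m×n pattern P can be uniquely self-assembled by a rectilinear tile assembly system (RTAS) T with m₀ tile types, then there is also a directed RTAS (DTAS) T' with m₀ tile types which self-assembles P. -/

import Mathlib

/-- A colored Wang tile with a color and four glues (north, east, south, west). -/
structure Tile (C G : Type) where
  color : C
  north : G
  east : G
  south : G
  west : G
deriving DecidableEq

/-- A rectilinear tile assembly system: a finite set of tile types together with
an L-shaped seed, given by its north glues (bottom arm) and east glues (left arm). -/
structure RTAS (C G : Type) where
  tiles : Finset (Tile C G)
  seedN : ℕ → G
  seedE : ℕ → G

/-- A tile assignment for the `M × N` rectangle spanned by the seed: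
every tile belongs to the system, west/south glues match the east/north glues of the
west/south neighbours, and the seed glues on the boundary. -/
def IsAssignment {C G : Type} (T : RTAS C G) (M N : ℕ) (f : ℕ → ℕ → Tile C G) : Prop :=
  (∀ x < M, ∀ y < N, f x y ∈ T.tiles) ∧
  (∀ y < N, (f 0 y).west = T.seedE y) ∧
  (∀ x < M, (f x 0).south = T.seedN x) ∧
  (∀ x, x + 1 < M → ∀ y < N, (f (x + 1) y).west = (f x y).east) ∧
  (∀ x < M, ∀ y, y + 1 < N → (f x (y + 1)).south = (f x y).north)

/-- `T` self-assembles the `M × N` pattern `P` if some tile assignment realizes `P`. -/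
def SelfAssembles {C G : Type} (T : RTAS C G) (M N : ℕ) (P : ℕ → ℕ → C) : Prop :=
  ∃ f, IsAssignment T M N f ∧ ∀ x < M, ∀ y < N, (f x y).color = P x y

/-- A directed RTAS: distinct tile types differ in their south or west glue. -/
def DirectedTAS {C G : Type} (T : RTAS C G) : Prop :=
  ∀ t₁ ∈ T.tiles, ∀ t₂ ∈ T.tiles, t₁ ≠ t₂ → t₁.south ≠ t₂.south ∨ t₁.west ≠ t₂.west

/-- The set of colors occurring in the `M × N` pattern `P`. -/
def colorsOf {C : Type} [DecidableEq C] (M N : ℕ) (P : ℕ → ℕ → C) : Finset C :=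
  (Finset.range M ×ˢ Finset.range N).image fun q => P q.1 q.2

/-- A producible partial configuration: every placed tile is in `T` and is supported
by its west and south neighbours (or by the seed on the boundary). -/
def IsProducible {C G : Type} (T : RTAS C G) (M N : ℕ)
    (g : ℕ → ℕ → Option (Tile C G)) : Prop :=
  (∀ x y, M ≤ x ∨ N ≤ y → g x y = none) ∧
  ∀ x y t, g x y = some t →
    t ∈ T.tiles ∧
    (x = 0 → t.west = T.seedE y) ∧
    (∀ x', x = x' + 1 → ∃ t', g x' y = some t' ∧ t.west = t'.east) ∧
    (y = 0 → t.south = T.seedN x) ∧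
    (∀ y', y = y' + 1 → ∃ t', g x y' = some t' ∧ t.south = t'.north)

/-- The tile `t` can attach to the configuration `g` at the empty position `(x, y)`:
its west and south neighbours (or the seed) are present and the inputs match. -/
def CanAttach {C G : Type} (T : RTAS C G) (M N : ℕ)
    (g : ℕ → ℕ → Option (Tile C G)) (x y : ℕ) (t : Tile C G) : Prop :=
  x < M ∧ y < N ∧ g x y = none ∧ t ∈ T.tiles ∧
  ((x = 0 ∧ t.west = T.seedE y) ∨
    (∃ x' t', x = x' + 1 ∧ g x' y = some t' ∧ t.west = t'.east)) ∧
  ((y = 0 ∧ t.south = T.seedN x) ∨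
    (∃ y' t', y = y' + 1 ∧ g x y' = some t' ∧ t.south = t'.north))

/-- A maximal configuration grown from the seed: producible and no tile can attach. -/
def MaximalConfig {C G : Type} (T : RTAS C G) (M N : ℕ)
    (g : ℕ → ℕ → Option (Tile C G)) : Prop :=
  IsProducible T M N g ∧ ∀ x y t, ¬ CanAttach T M N g x y t

/-- `T` uniquely self-assembles `P`: some tile assignment realizes `P` and every
maximal structure grown from the seed yields this same assignment. -/
def UniquelySelfAssembles {C G : Type} (T : RTAS C G) (M N : ℕ)
    (P : ℕ → ℕ → C) : Prop :=
  ∃ f, IsAssignment T M N f ∧ (∀ x < M, ∀ y < N, (f x y).color = P x y) ∧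
    ∀ g, MaximalConfig T M N g → ∀ x < M, ∀ y < N, g x y = some (f x y)

section Aux

open Classical in
/-- Deterministic greedy growth of a configuration, preferring the tile `t₂`
at position `(a, b)`. -/
noncomputable def grow {C G : Type} (T : RTAS C G) (M N a b : ℕ) (t₂ : Tile C G)
    (x y : ℕ) : Option (Tile C G) :=
  if x < M ∧ y < N then
    let wIn : Option G :=
      if x = 0 then some (T.seedE y) else Option.map Tile.east (grow T M N a b t₂ (x - 1) y)
    let sIn : Option G :=
      if y = 0 then some (T.seedN x) else Option.map Tile.north (grow T M N a b t₂ x (y - 1))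
    if x = a ∧ y = b ∧ t₂ ∈ T.tiles ∧ wIn = some t₂.west ∧ sIn = some t₂.south then
      some t₂
    else if h : ∃ t ∈ T.tiles, wIn = some t.west ∧ sIn = some t.south then
      some h.choose
    else none
  else none
termination_by x + y
decreasing_by all_goals omega

end Aux

/-- The glue offered to position `(x,y)` from the west. -/
noncomputable def wIn {C G : Type} (T : RTAS C G) (M N a b : ℕ) (t₂ : Tile C G)
    (x y : ℕ) : Option G :=
  match x with
  | 0 => some (T.seedE y)
  | x' + 1 => Option.map Tile.east (grow T M N a b t₂ x' y)

/-- The glue offered to position `(x,y)` from the south. -/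
noncomputable def sIn {C G : Type} (T : RTAS C G) (M N a b : ℕ) (t₂ : Tile C G)
    (x y : ℕ) : Option G :=
  match y with
  | 0 => some (T.seedN x)
  | y' + 1 => Option.map Tile.north (grow T M N a b t₂ x y')

open Classical in
lemma grow_eq {C G : Type} (T : RTAS C G) (M N a b : ℕ) (t₂ : Tile C G) (x y : ℕ) :
    grow T M N a b t₂ x y =
      if x < M ∧ y < N then
        if x = a ∧ y = b ∧ t₂ ∈ T.tiles ∧ wIn T M N a b t₂ x y = some t₂.west ∧
            sIn T M N a b t₂ x y = some t₂.south then
          some t₂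
        else if h : ∃ t ∈ T.tiles, wIn T M N a b t₂ x y = some t.west ∧
            sIn T M N a b t₂ x y = some t.south then
          some h.choose
        else none
      else none := by
  rw [grow.eq_def]
  cases x <;> cases y <;> rfl

lemma grow_some {C G : Type} {T : RTAS C G} {M N a b : ℕ} {t₂ : Tile C G} {x y : ℕ}
    {t : Tile C G} (h : grow T M N a b t₂ x y = some t) :
    x < M ∧ y < N ∧ t ∈ T.tiles ∧ wIn T M N a b t₂ x y = some t.west ∧
      sIn T M N a b t₂ x y = some t.south := by
  rw [grow_eq] at h
  split at h
  · rename_i hxy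
    split at h
    · rename_i hc
      cases h
      exact ⟨hxy.1, hxy.2, hc.2.2.1, hc.2.2.2.1, hc.2.2.2.2⟩
    · split at h
      · rename_i hex
        cases h
        obtain ⟨ht, hw, hs⟩ := hex.choose_spec
        exact ⟨hxy.1, hxy.2, ht, hw, hs⟩
      · exact absurd h (by simp)
  · exact absurd h (by simp)

lemma grow_producible {C G : Type} (T : RTAS C G) (M N a b : ℕ) (t₂ : Tile C G) :
    IsProducible T M N (grow T M N a b t₂) := by
  constructor
  · intro x y hxy
    rw [grow_eq, if_neg (by omega)]
  · intro x y t h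
    obtain ⟨hx, hy, ht, hw, hs⟩ := grow_some h
    refine ⟨ht, ?_, ?_, ?_, ?_⟩
    · rintro rfl
      simp only [wIn, Option.some.injEq] at hw
      exact hw.symm
    · rintro x' rfl
      simp only [wIn] at hw
      obtain ⟨t', h1, h2⟩ := Option.map_eq_some_iff.mp hw
      exact ⟨t', h1, h2.symm⟩
    · rintro rfl
      simp only [sIn, Option.some.injEq] at hs
      exact hs.symm
    · rintro y' rfl
      simp only [sIn] at hs
      obtain ⟨t', h1, h2⟩ := Option.map_eq_some_iff.mp hs
      exact ⟨t', h1, h2.symm⟩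

lemma grow_maximal {C G : Type} (T : RTAS C G) (M N a b : ℕ) (t₂ : Tile C G) :
    ∀ x y t, ¬ CanAttach T M N (grow T M N a b t₂) x y t := by
  rintro x y t ⟨hx, hy, hnone, ht, hwc, hsc⟩
  rw [grow_eq, if_pos ⟨hx, hy⟩] at hnone
  have hex : ∃ t' ∈ T.tiles, wIn T M N a b t₂ x y = some t'.west ∧
      sIn T M N a b t₂ x y = some t'.south := by
    refine ⟨t, ht, ?_, ?_⟩
    · rcases hwc with ⟨rfl, hw⟩ | ⟨x', t', rfl, hg, hw⟩
      · simp [wIn, hw]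
      · simp [wIn, hg, hw]
    · rcases hsc with ⟨rfl, hs⟩ | ⟨y', t', rfl, hg, hs⟩
      · simp [sIn, hs]
      · simp [sIn, hg, hs]
  split at hnone
  · exact absurd hnone (by simp)
  · exact absurd hnone (by simp)

lemma grow_key {C G : Type} {T : RTAS C G} {M N : ℕ} {f : ℕ → ℕ → Tile C G}
    (hA : IsAssignment T M N f)
    (hMax : ∀ g, MaximalConfig T M N g → ∀ x < M, ∀ y < N, g x y = some (f x y))
    {a b : ℕ} (ha : a < M) (hb : b < N) {t₂ : Tile C G} (ht₂ : t₂ ∈ T.tiles)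
    (hw : t₂.west = (f a b).west) (hs : t₂.south = (f a b).south) :
    t₂ = f a b := by
  have hmc : MaximalConfig T M N (grow T M N a b t₂) :=
    ⟨grow_producible T M N a b t₂, grow_maximal T M N a b t₂⟩
  have hfab := hMax _ hmc a ha b hb
  have hab : grow T M N a b t₂ a b = some t₂ := by
    rw [grow_eq, if_pos ⟨ha, hb⟩, if_pos]
    refine ⟨rfl, rfl, ht₂, ?_, ?_⟩
    · cases a with
      | zero =>
        simp only [wIn, Option.some.injEq]
        rw [hw, hA.2.1 b hb]
      | succ x' =>
        simp only [wIn]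
        rw [hMax _ hmc x' (by omega) b hb]
        simp only [Option.map_some, Option.some.injEq]
        rw [hw, hA.2.2.2.1 x' ha b hb]
    · cases b with
      | zero =>
        simp only [sIn, Option.some.injEq]
        rw [hs, hA.2.2.1 a ha]
      | succ y' =>
        simp only [sIn]
        rw [hMax _ hmc a ha y' (by omega)]
        simp only [Option.map_some, Option.some.injEq]
        rw [hs, hA.2.2.2.2 a ha y' hb]
  rw [hab] at hfab
  exact Option.some.inj hfab

/-- If an `M × N` pattern `P` can be uniquely self-assembled by an RTAS `T` with `m₀`
tile types, then there is also a directed RTAS `T'` with `m₀` tile types which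
self-assembles `P`. -/
theorem directed_of_unique_self_assembly {C G : Type} [DecidableEq C] [DecidableEq G]
    (M N m₀ : ℕ) (P : ℕ → ℕ → C) (T : RTAS C G)
    (hcard : T.tiles.card = m₀)
    (hU : UniquelySelfAssembles T M N P) :
    ∃ (G' : Type) (T' : RTAS C G'),
      DirectedTAS T' ∧ T'.tiles.card = m₀ ∧ SelfAssembles T' M N P := by
  classical
  obtain ⟨f, hA, hC, hMax⟩ := hU
  set used : Finset (Tile C G) :=
    (Finset.range M ×ˢ Finset.range N).image (fun q => f q.1 q.2) with hused
  have mem_used : ∀ t, t ∈ used ↔ ∃ a, a < M ∧ ∃ b, b < N ∧ f a b = t := by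
    intro t
    simp only [hused, Finset.mem_image, Finset.mem_product, Finset.mem_range, Prod.exists]
    constructor
    · rintro ⟨a, b, ⟨ha, hb⟩, h⟩; exact ⟨a, ha, b, hb, h⟩
    · rintro ⟨a, ha, b, hb, h⟩; exact ⟨a, b, ⟨ha, hb⟩, h⟩
  -- any tile of `T` sharing south and west glues with a used tile equals it
  have key : ∀ t₁ ∈ used, ∀ t₂ ∈ T.tiles,
      t₂.south = t₁.south → t₂.west = t₁.west → t₂ = t₁ := by
    intro t₁ h₁ t₂ h₂ hS hW
    obtain ⟨a, ha, b, hb, rfl⟩ := (mem_used t₁).mp h₁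
    exact grow_key hA hMax ha hb h₂ hW hS
  -- relabel glues: used tiles keep their glues (tagged `inl`), unused tiles get
  -- fresh input glues (tagged `inr` with the tile itself)
  let φ : Tile C G → Tile C (G ⊕ Tile C G) := fun t =>
    if t ∈ used then
      ⟨t.color, Sum.inl t.north, Sum.inl t.east, Sum.inl t.south, Sum.inl t.west⟩
    else
      ⟨t.color, Sum.inl t.north, Sum.inl t.east, Sum.inr t, Sum.inr t⟩
  have hφinj : Function.Injective φ := by
    intro t t' h
    by_cases h1 : t ∈ used <;> by_cases h2 : t' ∈ used <;>
      simp only [φ, h1, h2, if_pos, if_neg, Tile.mk.injEq, Sum.inl.injEq,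
        Sum.inr.injEq, if_true, if_false, reduceIte] at h
    · cases t; cases t'; simp only [Tile.mk.injEq]; exact h
    · exact absurd h.2.2.2.1 (by simp)
    · exact absurd h.2.2.2.1 Sum.inr_ne_inl
    · exact h.2.2.2.1
  refine ⟨G ⊕ Tile C G,
    ⟨T.tiles.image φ, fun x => Sum.inl (T.seedN x), fun y => Sum.inl (T.seedE y)⟩,
    ?_, ?_, ?_⟩
  · -- directedness
    rintro t₁' ht₁' t₂' ht₂' hne
    simp only [Finset.mem_image] at ht₁' ht₂'
    obtain ⟨s₁, hs₁, rfl⟩ := ht₁'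
    obtain ⟨s₂, hs₂, rfl⟩ := ht₂'
    by_contra hcon
    push_neg at hcon
    obtain ⟨hS, hW⟩ := hcon
    apply hne
    by_cases h1 : s₁ ∈ used <;> by_cases h2 : s₂ ∈ used <;>
      simp only [φ, h1, h2, if_true, if_false, reduceIte] at hS hW ⊢
    · simp only [Sum.inl.injEq] at hS hW
      rw [key s₁ h1 s₂ hs₂ hS.symm hW.symm]
    · exact absurd hS (by simp)
    · exact absurd hS (by simp)
    · simp only [Sum.inr.injEq] at hS
      rw [hS]
  · -- same number of tile types
    rw [Finset.card_image_of_injective _ hφinj, hcard]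
  · -- self-assembly of P
    refine ⟨fun x y =>
      ⟨(f x y).color, Sum.inl (f x y).north, Sum.inl (f x y).east,
        Sum.inl (f x y).south, Sum.inl (f x y).west⟩, ⟨?_, ?_, ?_, ?_, ?_⟩, ?_⟩
    · intro x hx y hy
      simp only [Finset.mem_image]
      refine ⟨f x y, hA.1 x hx y hy, ?_⟩
      have : f x y ∈ used := (mem_used _).mpr ⟨x, hx, y, hy, rfl⟩
      simp [φ, this]
    · intro y hy
      simp [hA.2.1 y hy]
    · intro x hx
      simp [hA.2.2.1 x hx]
    · intro x hx y hy
      simp [hA.2.2.2.1 x hx y hy]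
    · intro x hx y hy
      simp [hA.2.2.2.2 x hx y hy]
    · intro x hx y hy
      exact hC x hx y hy
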